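/- Let Σ be a non-trivial subgroup of an infinite group H. Suppose that for all n ≥ 1, all x₁,…,xₙ ∈ H \ {1}, and all finite F ⊂ H, the set {h ∈ H : h·xᵢ ∉ ΣF for all i, and h·xᵢ·h⁻¹ ∉ Σ for all i} is non-empty. Then Σ is highly core-free in H. -/
import Mathlib


/-- The set ΣF = {σf : σ ∈ Σ, f ∈ F}. -/
def cosetProd {H : Type*} [Group H] (A : Subgroup H) (F : Set H) : Set H :=
  {h | ∃ σ ∈ A, ∃ f ∈ F, h = σ * f}

/-- A subgroup `A ≤ H` is highly core-free if for every finite `F ⊆ H`, every `n ≥ 1`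
and all nonempty `S₁, …, Sₙ ⊆ H` covering `H \ ΣF`, some `Sₖ` has trivial core
`⋂_{h ∈ Sₖ} h⁻¹ A h = {1}`. -/
def HighlyCoreFree {H : Type*} [Group H] (A : Subgroup H) : Prop :=
  ∀ F : Set H, F.Finite → ∀ n : ℕ, 1 ≤ n → ∀ S : Fin n → Set H,
    (∀ k, (S k).Nonempty) → (∀ h : H, h ∉ cosetProd A F → ∃ k, h ∈ S k) →
    ∃ k, ∀ x : H, (∀ h ∈ S k, h * x * h⁻¹ ∈ A) → x = 1
/-- Implication (2 ⟹ 1): the nonemptiness condition on the sets `H_{F,x̄}`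
implies that `A` is highly core-free. -/
theorem condition2_implies_hcf {H : Type*} [Group H] [Infinite H] (A : Subgroup H)
    (hne : A ≠ ⊥)
    (h2 : ∀ n : ℕ, 1 ≤ n → ∀ x : Fin n → H, (∀ i, x i ≠ 1) → ∀ F : Set H, F.Finite →
      ∃ h : H, (∀ i, h * x i ∉ cosetProd A F) ∧ (∀ i, h * x i * h⁻¹ ∉ A)) :
    HighlyCoreFree A := by
  intro F hF n hn S hSne hcov
  by_contra hcon
  push_neg at hcon
  choose x hxA hxne using hcon
  set x0 : H := x ⟨0, hn⟩ with hx0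
  -- family: x0 and all conjugates x0 * x k * x0⁻¹
  set y : Fin (n + 1) → H := fun j =>
    if hj : (j : ℕ) < n then x0 * x ⟨j, hj⟩ * x0⁻¹ else x0 with hy
  have hyne : ∀ j, y j ≠ 1 := by
    intro j
    by_cases hj : (j : ℕ) < n
    · simp only [hy, dif_pos hj]
      intro hone
      apply hxne ⟨j, hj⟩
      have := congrArg (fun z => x0⁻¹ * z * x0) hone
      simpa [mul_assoc] using this
    · simpa [hy, dif_neg hj] using hxne ⟨0, hn⟩
  obtain ⟨h, hF1, hF2⟩ := h2 (n + 1) (Nat.le_add_left 1 n) y hyne F hF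
  have hlast : h * x0 ∉ cosetProd A F := by
    have := hF1 (Fin.last n)
    simpa [hy, Fin.last] using this
  obtain ⟨k, hk⟩ := hcov (h * x0) hlast
  have hmem : (h * x0) * x k * (h * x0)⁻¹ ∈ A := hxA k (h * x0) hk
  have hnot : h * (x0 * x k * x0⁻¹) * h⁻¹ ∉ A := by
    have hklt : ((⟨(k : ℕ), by omega⟩ : Fin (n + 1)) : ℕ) < n := k.2
    have := hF2 ⟨(k : ℕ), by omega⟩
    simpa [hy, dif_pos hklt] using this
  apply hnot
  have : h * (x0 * x k * x0⁻¹) * h⁻¹ = (h * x0) * x k * (h * x0)⁻¹ := by group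
  rw [this]
  exact hmem
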